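/- Let (A, ≤, ∧, ∨) be a finite lattice. For every element a of A, there exists a unique antichain B of the subposet JIrr(A) of join-irreducible elements such that a = ⋁ B and B is maximal among all antichains of join-irreducibles whose join is a, with respect to the order on antichains given by inclusion of the generated order ideals. (This B is called the upper join-decomposition of a.) -/
import Mathlib


/-- In a finite lattice, every element `a` has a unique antichain `B` of
join-irreducible elements with `a = ⋁ B` which is maximal (with respect to the order on
antichains given by inclusion of generated order ideals, i.e. `C ⊑ B` iff every element
of `C` is below some element of `B`) among all antichains of join-irreducibles whose
join is `a`: the upper join-decomposition of `a`. -/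
theorem stmt6 {A : Type*} [Lattice A] [OrderBot A] [Fintype A] (a : A) :
    ∃! B : Finset A,
      ((∀ b ∈ B, SupIrred b) ∧ IsAntichain (· ≤ ·) (B : Set A) ∧ a = B.sup id) ∧
      ∀ C : Finset A, (∀ c ∈ C, SupIrred c) → IsAntichain (· ≤ ·) (C : Set A) →
        a = C.sup id → ∀ c ∈ C, ∃ b ∈ B, c ≤ b := by
  classical
  set P : A → Prop := fun j => SupIrred j ∧ j ≤ a with hP
  set B : Finset A := Finset.univ.filter (fun b => Maximal P b) with hB
  have memB : ∀ b, b ∈ B ↔ Maximal P b := by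
    intro b; simp [hB]
  -- maximality clause
  have key : ∀ C : Finset A, (∀ c ∈ C, SupIrred c) →
      a = C.sup id → ∀ c ∈ C, ∃ b ∈ B, c ≤ b := by
    intro C hirr hsup c hc
    have hca : c ≤ a := hsup ▸ Finset.le_sup (f := id) hc
    obtain ⟨b, hcb, hmax⟩ := Finite.exists_le_maximal (p := P) ⟨hirr c hc, hca⟩
    exact ⟨b, (memB b).2 hmax, hcb⟩
  have hirrB : ∀ b ∈ B, SupIrred b := fun b hb => ((memB b).1 hb).1.1
  have hanti : IsAntichain (· ≤ ·) (B : Set A) := by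
    intro x hx y hy hxy hle
    have hx' := (memB x).1 hx
    have hy' := (memB y).1 hy
    exact hxy (le_antisymm hle (hx'.2 hy'.1 hle))
  have hsupB : a = B.sup id := by
    have hle : B.sup id ≤ a := Finset.sup_le fun b hb => ((memB b).1 hb).1.2
    obtain ⟨s, hs, hsi⟩ := exists_supIrred_decomposition a
    have hge : a ≤ B.sup id := by
      rw [← hs]
      apply Finset.sup_le
      intro c hc
      obtain ⟨b, hbB, hcb⟩ := key s (fun c hc => hsi hc) hs.symm c hc
      exact le_trans hcb (Finset.le_sup (f := id) hbB)
    exact le_antisymm hge hle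
  refine ⟨B, ⟨⟨hirrB, hanti, hsupB⟩, fun C hC hCa hCs => key C hC hCs⟩, ?_⟩
  rintro B' ⟨⟨hirr', hanti', hsup'⟩, hmax'⟩
  -- both dominate each other; antichains with same ideal are equal
  have h1 : ∀ b ∈ B', ∃ c ∈ B, b ≤ c := key B' hirr' hsup'
  have h2 : ∀ b ∈ B, ∃ c ∈ B', b ≤ c := hmax' B hirrB hanti hsupB
  apply Finset.ext
  intro x
  constructor
  · intro hx
    obtain ⟨c, hc, hxc⟩ := h1 x hx
    obtain ⟨d, hd, hcd⟩ := h2 c hc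
    have hxd : x = d := by
      by_contra hne
      exact hanti' hx hd hne (hxc.trans hcd)
    have : x = c := le_antisymm hxc (hxd ▸ hcd)
    exact this ▸ hc
  · intro hx
    obtain ⟨c, hc, hxc⟩ := h2 x hx
    obtain ⟨d, hd, hcd⟩ := h1 c hc
    have hxd : x = d := by
      by_contra hne
      exact hanti hx hd hne (hxc.trans hcd)
    have : x = c := le_antisymm hxc (hxd ▸ hcd)
    exact this ▸ hc
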